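/- arXiv:2506.08063 — 2 statements merged into one kernel-verified Lean document; each statement's English description precedes it below -/
import Mathlib

section
/- Let k and L be positive integers and let n ≥ L be an integer. Then (∑_{i=n-L+1}^{n} i^k) / (∑_{i=1}^{n} i^k) ≤ L(k+1)/n. In particular the contribution of the most recent L samples under power-of-natural-number weighting vanishes at rate O(1/n). -/
lemma step_bound (m : ℕ) (a : ℝ) (ha : 0 ≤ a) :
    (a + 1) ^ (m + 1) - a ^ (m + 1) ≤ (m + 1) * (a + 1) ^ m := by
  induction m with
  | zero => simp
  | succ m ih =>
    have h1 : (a + 1) ^ (m + 2) - a ^ (m + 2)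
        = (a + 1) ^ (m + 1) + a * ((a + 1) ^ (m + 1) - a ^ (m + 1)) := by ring
    have h2 : a * ((a + 1) ^ (m + 1) - a ^ (m + 1)) ≤ a * ((m + 1) * (a + 1) ^ m) :=
      mul_le_mul_of_nonneg_left ih ha
    have h3 : a * ((m + 1) * (a + 1) ^ m) ≤ (m + 1) * (a + 1) ^ (m + 1) := by
      have : a * (a + 1) ^ m ≤ (a + 1) ^ (m + 1) := by
        rw [pow_succ]
        nlinarith [pow_nonneg (by linarith : (0:ℝ) ≤ a + 1) m]
      nlinarith [this]
    push_cast
    linarith [h1, h2, h3]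

lemma denom_bound (k n : ℕ) :
    ((n : ℝ)) ^ (k + 1) ≤ (k + 1) * ∑ i ∈ Finset.Icc 1 n, (i : ℝ) ^ k := by
  have hIcc : ∑ i ∈ Finset.Icc 1 n, (i : ℝ) ^ k
      = ∑ j ∈ Finset.range n, ((1 + j : ℕ) : ℝ) ^ k := by
    rw [← Finset.Ico_add_one_right_eq_Icc, Finset.sum_Ico_eq_sum_range]
    simp
  have htel : ∑ j ∈ Finset.range n,
      (((j + 1 : ℕ) : ℝ) ^ (k + 1) - ((j : ℕ) : ℝ) ^ (k + 1)) = (n : ℝ) ^ (k + 1) := by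
    rw [Finset.sum_range_sub (fun j => ((j : ℕ) : ℝ) ^ (k + 1))]
    simp
  rw [hIcc, Finset.mul_sum]
  rw [← htel]
  apply Finset.sum_le_sum
  intro j _
  have := step_bound k (j : ℝ) (Nat.cast_nonneg j)
  have h2 : (1 + (j:ℝ)) ^ k = ((j:ℝ) + 1) ^ k := by ring
  push_cast
  push_cast at this
  rw [h2]
  linarith

/-- Alt-RVFL: under power-of-natural-number weighting `i^k`, the proportion of the total
weight carried by the most recent `L` samples is at most `L(k+1)/n`; in particular it
vanishes at rate `O(1/n)`. -/
theorem alt_rvfl_weight_proportion_bound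
    (k L n : ℕ) (hk : 0 < k) (hL : 0 < L) (hn : L ≤ n) :
    (∑ i ∈ Finset.Ioc (n - L) n, (i : ℝ) ^ k) / (∑ i ∈ Finset.Icc 1 n, (i : ℝ) ^ k)
      ≤ (L : ℝ) * (k + 1) / n := by
  have hn0 : 0 < n := lt_of_lt_of_le hL hn
  have hnR : (0 : ℝ) < n := by exact_mod_cast hn0
  set S := ∑ i ∈ Finset.Icc 1 n, (i : ℝ) ^ k with hS
  have hden := denom_bound k n
  have hnk : (0 : ℝ) < (n : ℝ) ^ (k + 1) := pow_pos hnR _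
  have hSpos : 0 < S := by
    have hk1 : (0 : ℝ) < (k : ℝ) + 1 := by positivity
    nlinarith
  -- numerator bound
  have hcard : (Finset.Ioc (n - L) n).card = L := by
    rw [Nat.card_Ioc]; omega
  have hnum : ∑ i ∈ Finset.Ioc (n - L) n, (i : ℝ) ^ k ≤ (L : ℝ) * (n : ℝ) ^ k := by
    calc ∑ i ∈ Finset.Ioc (n - L) n, (i : ℝ) ^ k
        ≤ ∑ _i ∈ Finset.Ioc (n - L) n, (n : ℝ) ^ k := by
          apply Finset.sum_le_sum
          intro i hi
          have hi' := (Finset.mem_Ioc.mp hi).2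
          exact pow_le_pow_left₀ (Nat.cast_nonneg i) (by exact_mod_cast hi') k
      _ = (L : ℝ) * (n : ℝ) ^ k := by
          rw [Finset.sum_const, hcard]; simp [mul_comm]
  rw [div_le_div_iff₀ hSpos hnR]
  have hLk : (0 : ℝ) ≤ (L : ℝ) := Nat.cast_nonneg L
  calc (∑ i ∈ Finset.Ioc (n - L) n, (i : ℝ) ^ k) * n
      ≤ (L : ℝ) * (n : ℝ) ^ k * n := by
        apply mul_le_mul_of_nonneg_right hnum (le_of_lt hnR)
    _ = (L : ℝ) * (n : ℝ) ^ (k + 1) := by ring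
    _ ≤ (L : ℝ) * ((k + 1) * S) := by
        apply mul_le_mul_of_nonneg_left _ hLk
        exact hden
    _ = (L : ℝ) * ((k : ℝ) + 1) * S := by push_cast; ring
end

section
/- Let λ > 0 and θ > 0 be real numbers, let Aₙ be a real n × d matrix, ΔA a real 1 × d matrix, Sₙ a real n × m matrix, ΔS a real 1 × m matrix, and Tₙ a real n × n matrix. Define Pₙ = (λI + AₙᵀTₙᵀTₙAₙ)^{-1}, Qₙ = AₙᵀTₙᵀTₙSₙ, W_bⁿ = PₙQₙ, ΔP = θ^{2n} Pₙ ΔAᵀ (1 + θ^{2n} ΔA Pₙ ΔAᵀ)^{-1} ΔA Pₙ, and ΔQ = θ^{2n} ΔAᵀ ΔS. Let A_{n+1} = [Aₙ; ΔA], S_{n+1} = [Sₙ; ΔS], T_{n+1} = diag(Tₙ, θⁿ), and W_b^{n+1} = (λI + A_{n+1}ᵀT_{n+1}ᵀT_{n+1}A_{n+1})^{-1} A_{n+1}ᵀT_{n+1}ᵀT_{n+1} S_{n+1}. Then W_b^{n+1} = W_bⁿ + Pₙ ΔQ − ΔP Qₙ − ΔP ΔQ. -/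
open Matrix

lemma sherman {d : ℕ} (M : Matrix (Fin d) (Fin d) ℝ) (hM : IsUnit M.det) (t : ℝ)
    (B : Matrix (Fin 1) (Fin d) ℝ)
    (hc : ((1 : Matrix (Fin 1) (Fin 1) ℝ) + t • (B * M⁻¹ * Bᵀ)) *
        ((1 : Matrix (Fin 1) (Fin 1) ℝ) + t • (B * M⁻¹ * Bᵀ))⁻¹ = 1) :
    (M + t • (Bᵀ * B)) *
      (M⁻¹ - t • (M⁻¹ * Bᵀ * ((1 : Matrix (Fin 1) (Fin 1) ℝ) + t • (B * M⁻¹ * Bᵀ))⁻¹ * B * M⁻¹)) = 1 := by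
  set P := M⁻¹ with hP
  set c := (1 : Matrix (Fin 1) (Fin 1) ℝ) + t • (B * P * Bᵀ) with hcdef
  have hMP : M * P = 1 := mul_nonsing_inv M hM
  have hMP' : ∀ {k : ℕ} (X : Matrix (Fin d) (Fin k) ℝ), M * (P * X) = X := by
    intro k X; rw [← Matrix.mul_assoc, hMP, Matrix.one_mul]
  have hz : (1 : Matrix (Fin 1) (Fin 1) ℝ) - c⁻¹ - t • ((B * P * Bᵀ) * c⁻¹) = 0 := by
    have h := hc
    rw [add_mul, one_mul, smul_mul_assoc] at h
    rw [sub_sub, h, sub_self]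
  have h9 : t • (Bᵀ * ((( (1 : Matrix (Fin 1) (Fin 1) ℝ) - c⁻¹ - t • ((B * P * Bᵀ) * c⁻¹))) * (B * P))) = 0 := by
    rw [hz]; simp
  simp only [Matrix.mul_sub, Matrix.sub_mul, Matrix.add_mul, Matrix.mul_add,
    smul_mul_assoc, mul_smul_comm, Matrix.mul_smul, Matrix.smul_mul, smul_smul,
    Matrix.mul_assoc, Matrix.mul_one, Matrix.one_mul, hMP, hMP'] at *
  simp only [smul_sub, smul_add] at h9 ⊢
  rw [sub_sub, sub_eq_zero] at h9
  rw [h9]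
  abel

/-- Lite-RVFL incremental update rule (Theorem 1 of the paper): the new output weights
`W_b^{n+1}` computed from the stacked data satisfy
`W_b^{n+1} = W_bⁿ + Pₙ ΔQ - ΔP Qₙ - ΔP ΔQ`. -/
theorem lite_rvfl_incremental_update
    {n d m : ℕ} (lam θ : ℝ) (hlam : 0 < lam) (hθ : 0 < θ)
    (A : Matrix (Fin n) (Fin d) ℝ) (ΔA : Matrix (Fin 1) (Fin d) ℝ)
    (S : Matrix (Fin n) (Fin m) ℝ) (ΔS : Matrix (Fin 1) (Fin m) ℝ)
    (T : Matrix (Fin n) (Fin n) ℝ) :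
    let P : Matrix (Fin d) (Fin d) ℝ :=
      (lam • (1 : Matrix (Fin d) (Fin d) ℝ) + Aᵀ * Tᵀ * T * A)⁻¹
    let Q : Matrix (Fin d) (Fin m) ℝ := Aᵀ * Tᵀ * T * S
    let Wb : Matrix (Fin d) (Fin m) ℝ := P * Q
    let ΔP : Matrix (Fin d) (Fin d) ℝ :=
      θ ^ (2 * n) • (P * ΔAᵀ *
        ((1 : Matrix (Fin 1) (Fin 1) ℝ) + θ ^ (2 * n) • (ΔA * P * ΔAᵀ))⁻¹ * ΔA * P)
    let ΔQ : Matrix (Fin d) (Fin m) ℝ := θ ^ (2 * n) • (ΔAᵀ * ΔS)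
    let A1 := Matrix.fromRows A ΔA
    let S1 := Matrix.fromRows S ΔS
    let T1 := Matrix.fromBlocks T 0 0 (θ ^ n • (1 : Matrix (Fin 1) (Fin 1) ℝ))
    let Wb1 : Matrix (Fin d) (Fin m) ℝ :=
      (lam • (1 : Matrix (Fin d) (Fin d) ℝ) + A1ᵀ * T1ᵀ * T1 * A1)⁻¹ *
        (A1ᵀ * T1ᵀ * T1 * S1)
    Wb1 = Wb + P * ΔQ - ΔP * Q - ΔP * ΔQ := by
  intro P Q Wb ΔP ΔQ A1 S1 T1 Wb1
  set t := θ ^ (2 * n) with ht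
  set M := lam • (1 : Matrix (Fin d) (Fin d) ℝ) + Aᵀ * Tᵀ * T * A with hMdef
  -- positive definiteness of M
  have hTA : (Aᵀ * Tᵀ * T * A).PosSemidef := by
    have h := posSemidef_conjTranspose_mul_self (T * A)
    have : (T * A)ᴴ * (T * A) = Aᵀ * Tᵀ * T * A := by
      rw [conjTranspose_mul, conjTranspose_eq_transpose_of_trivial,
        conjTranspose_eq_transpose_of_trivial, ← Matrix.mul_assoc]
    rwa [this] at h
  have hM : M.PosDef := by
    have h1 : (lam • (1 : Matrix (Fin d) (Fin d) ℝ)).PosDef := by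
      rw [smul_one_eq_diagonal]
      exact PosDef.diagonal fun _ => hlam
    exact h1.add_posSemidef hTA
  have hMdet : IsUnit M.det := isUnit_iff_ne_zero.mpr hM.det_pos.ne'
  have hPeq : P = M⁻¹ := rfl
  have hPsd : P.PosSemidef := by rw [hPeq]; exact hM.inv.posSemidef
  -- the 1×1 matrix is invertible
  have hg : 0 ≤ (ΔA * P * ΔAᵀ) 0 0 := by
    have h := hPsd.dotProduct_mulVec_nonneg (fun j => ΔA 0 j)
    have heq : (ΔA * P * ΔAᵀ) 0 0 =
        star (fun j => ΔA 0 j) ⬝ᵥ P *ᵥ (fun j => ΔA 0 j) := by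
      simp only [mul_apply, transpose_apply, dotProduct, mulVec, star_trivial,
        Finset.sum_mul, Finset.mul_sum]
      rw [Finset.sum_comm]
      exact Finset.sum_congr rfl fun k _ => Finset.sum_congr rfl fun j _ => by ring
    rw [heq]; exact h
  have hcdet : IsUnit ((1 : Matrix (Fin 1) (Fin 1) ℝ) + t • (ΔA * P * ΔAᵀ)).det := by
    rw [det_fin_one]
    have : (0:ℝ) < 1 + t * (ΔA * P * ΔAᵀ) 0 0 := by
      have ht0 : 0 < t := pow_pos hθ _
      nlinarith
    simpa [Matrix.add_apply, Matrix.smul_apply, Matrix.one_apply] using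
      isUnit_iff_ne_zero.mpr this.ne'
  have hc : ((1 : Matrix (Fin 1) (Fin 1) ℝ) + t • (ΔA * M⁻¹ * ΔAᵀ)) *
      ((1 : Matrix (Fin 1) (Fin 1) ℝ) + t • (ΔA * M⁻¹ * ΔAᵀ))⁻¹ = 1 := by
    rw [← hPeq]
    exact mul_nonsing_inv _ hcdet
  -- block computations
  have hθ2 : θ ^ n * θ ^ n = t := by rw [ht, two_mul, pow_add]
  have hblock : A1ᵀ * T1ᵀ * T1 = fromCols (Aᵀ * Tᵀ * T) (t • ΔAᵀ) := by
    show (fromRows A ΔA)ᵀ * (fromBlocks T 0 0 (θ ^ n • 1))ᵀ * fromBlocks T 0 0 (θ ^ n • 1) = _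
    rw [transpose_fromRows, fromBlocks_transpose, transpose_zero, transpose_zero,
      transpose_smul, transpose_one, fromCols_mul_fromBlocks, fromCols_mul_fromBlocks]
    congr 1 <;> simp [Matrix.mul_smul, smul_smul, hθ2, Matrix.mul_assoc]
  have hA1 : A1ᵀ * T1ᵀ * T1 * A1 = Aᵀ * Tᵀ * T * A + t • (ΔAᵀ * ΔA) := by
    rw [hblock]
    show fromCols (Aᵀ * Tᵀ * T) (t • ΔAᵀ) * fromRows A ΔA = _
    rw [fromCols_mul_fromRows, Matrix.smul_mul]
  have hS1 : A1ᵀ * T1ᵀ * T1 * S1 = Q + ΔQ := by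
    rw [hblock]
    show fromCols (Aᵀ * Tᵀ * T) (t • ΔAᵀ) * fromRows S ΔS = _
    rw [fromCols_mul_fromRows, Matrix.smul_mul]
  have hsh := sherman M hMdet t ΔA hc
  have hinv : (lam • (1 : Matrix (Fin d) (Fin d) ℝ) + A1ᵀ * T1ᵀ * T1 * A1)⁻¹ = P - ΔP := by
    rw [hA1, ← add_assoc, ← hMdef]
    exact inv_eq_right_inv hsh
  show (lam • (1 : Matrix (Fin d) (Fin d) ℝ) + A1ᵀ * T1ᵀ * T1 * A1)⁻¹ *
      (A1ᵀ * T1ᵀ * T1 * S1) = Wb + P * ΔQ - ΔP * Q - ΔP * ΔQ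
  rw [hinv, hS1]
  show (P - ΔP) * (Q + ΔQ) = P * Q + P * ΔQ - ΔP * Q - ΔP * ΔQ
  rw [Matrix.sub_mul, Matrix.mul_add, Matrix.mul_add]
  abel
end
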